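/- Let C ⊆ ℍⁿ_κ be a closed κ-hyperbolically convex set, p = (p₁,…,p_{n+1}) ∈ ℍⁿ_κ and u = (u₁,…,u_{n+1}) ∈ K_C \ {0}. If (p_{n+1} − u_{n+1})(q_{n+1} − u_{n+1}/√(−κ⟨u,u⟩)) ≥ 0 for all q ∈ C, then (2 p_{n+1} e^{n+1} − u)ᵀ(q − u/√(−κ⟨u,u⟩)) ≥ 0 for all q ∈ C. -/

import Mathlib

noncomputable section

/-- Lorentzian inner product on ℝ^{n+1}. -/
def lip {n : ℕ} (x y : Fin (n+1) → ℝ) : ℝ :=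
  (∑ i : Fin n, x i.castSucc * y i.castSucc) - x (Fin.last n) * y (Fin.last n)

/-- Lorentzian norm (of vectors with nonnegative self-product). -/
def lnorm {n : ℕ} (x : Fin (n+1) → ℝ) : ℝ := Real.sqrt (lip x x)

/-- Euclidean dot product. -/
def edot {n : ℕ} (x y : Fin (n+1) → ℝ) : ℝ := ∑ i, x i * y i

/-- The matrix J = diag(1,…,1,−1) as a map. -/
def Jm {n : ℕ} (x : Fin (n+1) → ℝ) : Fin (n+1) → ℝ :=
  fun i => if i = Fin.last n then -(x i) else x i

/-- The κ-hyperbolic space form (hyperboloid model). -/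
def Hyp {n : ℕ} (κ : ℝ) : Set (Fin (n+1) → ℝ) :=
  {p | lip p p = -1/κ ∧ 0 < p (Fin.last n)}

/-- Inverse hyperbolic cosine. -/
def arcosh (x : ℝ) : ℝ := Real.log (x + Real.sqrt (x^2 - 1))

/-- Intrinsic distance on the κ-hyperbolic space form. -/
def dH {n : ℕ} (κ : ℝ) (p q : Fin (n+1) → ℝ) : ℝ :=
  (1 / Real.sqrt κ) * arcosh (-(κ * lip p q))

/-- Lorentzian projection onto the tangent space at p. -/
def projT {n : ℕ} (κ : ℝ) (p x : Fin (n+1) → ℝ) : Fin (n+1) → ℝ :=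
  x + (κ * lip p x) • p

/-- Logarithm map of the κ-hyperbolic space form. -/
def logH {n : ℕ} (κ : ℝ) (p q : Fin (n+1) → ℝ) : Fin (n+1) → ℝ :=
  (dH κ p q / lnorm (projT κ p q)) • projT κ p q

/-- Exponential map of the κ-hyperbolic space form. -/
def expH {n : ℕ} (κ : ℝ) (p v : Fin (n+1) → ℝ) : Fin (n+1) → ℝ :=
  Real.cosh (Real.sqrt κ * lnorm v) • p +
    (Real.sinh (Real.sqrt κ * lnorm v) / (Real.sqrt κ * lnorm v)) • v

/-- The cone spanned by a set. -/
def coneOf {n : ℕ} (C : Set (Fin (n+1) → ℝ)) : Set (Fin (n+1) → ℝ) :=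
  {x | ∃ t : ℝ, 0 ≤ t ∧ ∃ p ∈ C, x = t • p}

/-- The Lorentz cone. -/
def LorentzCone {n : ℕ} : Set (Fin (n+1) → ℝ) :=
  {x | lip x x ≤ 0 ∧ 0 ≤ x (Fin.last n)}

/-- The interior of the Lorentz cone. -/
def LorentzConeInt {n : ℕ} : Set (Fin (n+1) → ℝ) :=
  {x | lip x x < 0 ∧ 0 < x (Fin.last n)}


lemma lip_smul_left {n : ℕ} (t : ℝ) (x y : Fin (n+1) → ℝ) :
    lip (t • x) y = t * lip x y := by
  simp [lip, Finset.mul_sum, mul_sub]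
  ring_nf

lemma lip_smul_right {n : ℕ} (t : ℝ) (x y : Fin (n+1) → ℝ) :
    lip x (t • y) = t * lip x y := by
  simp [lip, Finset.mul_sum, mul_sub]
  ring_nf
  congr 1
  apply Finset.sum_congr rfl; intros; ring

lemma lip_sub_right {n : ℕ} (x y z : Fin (n+1) → ℝ) :
    lip x (y - z) = lip x y - lip x z := by
  simp [lip, mul_sub, Finset.sum_sub_distrib]
  ring

lemma edot_eq_lip {n : ℕ} (x y : Fin (n+1) → ℝ) :
    edot x y = lip x y + 2 * x (Fin.last n) * y (Fin.last n) := by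
  rw [edot, Fin.sum_univ_castSucc, lip]; ring

lemma hyp_lip_le {n : ℕ} {κ : ℝ} (hκ : 0 < κ) {p q : Fin (n+1) → ℝ}
    (hp : p ∈ Hyp κ) (hq : q ∈ Hyp κ) : lip p q ≤ -1/κ := by
  obtain ⟨hp1, hp2⟩ := hp
  obtain ⟨hq1, hq2⟩ := hq
  rw [lip] at hp1 hq1 ⊢
  set a := p (Fin.last n)
  set b := q (Fin.last n)
  have hneg : (-1:ℝ)/κ = -(1/κ) := by ring
  rw [hneg] at hp1 hq1 ⊢
  have hxx : (∑ i : Fin n, p i.castSucc ^ 2) = a * a - 1/κ := by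
    have : (∑ i : Fin n, p i.castSucc ^ 2) = ∑ i : Fin n, p i.castSucc * p i.castSucc := by
      apply Finset.sum_congr rfl; intros; ring
    rw [this]; linarith
  have hyy : (∑ i : Fin n, q i.castSucc ^ 2) = b * b - 1/κ := by
    have : (∑ i : Fin n, q i.castSucc ^ 2) = ∑ i : Fin n, q i.castSucc * q i.castSucc := by
      apply Finset.sum_congr rfl; intros; ring
    rw [this]; linarith
  have hcs := Finset.sum_mul_sq_le_sq_mul_sq (Finset.univ : Finset (Fin n))
    (fun i => p i.castSucc) (fun i => q i.castSucc)
  rw [hxx, hyy] at hcs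
  set S := ∑ i : Fin n, p i.castSucc * q i.castSucc with hS
  have ha : 0 ≤ a * a - 1/κ := by rw [← hxx]; positivity
  have hb : 0 ≤ b * b - 1/κ := by rw [← hyy]; positivity
  have hc : 0 < 1/κ := by positivity
  have hab : 0 ≤ a * b - 1/κ := by nlinarith
  have h1 : S^2 ≤ (a * b - 1/κ)^2 := by nlinarith [sq_nonneg (a - b)]
  nlinarith [h1, hab]


lemma edot_sub_left {n : ℕ} (x y z : Fin (n+1) → ℝ) :
    edot (x - y) z = edot x z - edot y z := by
  simp [edot, sub_mul, Finset.sum_sub_distrib]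

lemma edot_smul_left {n : ℕ} (c : ℝ) (x y : Fin (n+1) → ℝ) :
    edot (c • x) y = c * edot x y := by
  simp [edot, Finset.mul_sum, mul_assoc]

lemma edot_single {n : ℕ} (y : Fin (n+1) → ℝ) :
    edot (Pi.single (Fin.last n) 1 : Fin (n+1) → ℝ) y = y (Fin.last n) := by
  simp [edot, Pi.single_apply]

/-- Implication (i) ⟹ (ii) of the sufficient condition for computing the intrinsic
κ-projection: the componentwise last-coordinate condition implies the Euclidean
inequality (2p_{n+1}e^{n+1} − u)ᵀ(q − u/√(−κ⟨u,u⟩)) ≥ 0 for all q ∈ C. -/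
theorem last_coordinate_condition_implies_euclidean_condition {n : ℕ} (κ : ℝ) (hκ : 0 < κ)
    (C : Set (Fin (n+1) → ℝ)) (hC : C ⊆ Hyp κ) (hCc : IsClosed C)
    (hconv : Convex ℝ (coneOf C))
    (p u : Fin (n+1) → ℝ) (hp : p ∈ Hyp κ) (hu : u ∈ coneOf C) (hu0 : u ≠ 0)
    (hcond : ∀ q ∈ C, 0 ≤ (p (Fin.last n) - u (Fin.last n)) *
      (q (Fin.last n) - u (Fin.last n) / Real.sqrt (-(κ * lip u u)))) :
    ∀ q ∈ C, 0 ≤ edot ((2 * p (Fin.last n)) • (Pi.single (Fin.last n) 1 : Fin (n+1) → ℝ) - u)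
      (q - (Real.sqrt (-(κ * lip u u)))⁻¹ • u) := by

  obtain ⟨t, ht0, p', hp'C, huu⟩ := hu
  have hp' : p' ∈ Hyp κ := hC hp'C
  have ht : 0 < t := by
    rcases ht0.lt_or_eq with h | h
    · exact h
    · exact absurd (by rw [huu, ← h, zero_smul]) hu0
  have hsqrt : Real.sqrt (-(κ * lip u u)) = t := by
    have hlipu : -(κ * lip u u) = t^2 := by
      rw [huu, lip_smul_left, lip_smul_right, hp'.1]
      field_simp
    rw [hlipu, Real.sqrt_sq ht.le]
  have hscale : (Real.sqrt (-(κ * lip u u)))⁻¹ • u = p' := by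
    rw [hsqrt, huu, smul_smul, inv_mul_cancel₀ ht.ne', one_smul]
  intro q hq
  have hqH : q ∈ Hyp κ := hC hq
  have h1 : 0 ≤ (p (Fin.last n) - u (Fin.last n)) * (q (Fin.last n) - p' (Fin.last n)) := by
    have h := hcond q hq
    rw [hsqrt] at h
    have hu_last : u (Fin.last n) / t = p' (Fin.last n) := by
      rw [huu, Pi.smul_apply, smul_eq_mul, mul_div_cancel_left₀ _ ht.ne']
    rwa [hu_last] at h
  have h2 : lip u (q - p') ≤ 0 := by
    rw [lip_sub_right, huu, lip_smul_left, lip_smul_left, hp'.1]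
    have hle := hyp_lip_le hκ hp' hqH
    nlinarith [hle, ht]
  rw [hscale, edot_sub_left, edot_smul_left, edot_single, edot_eq_lip]
  have hlast : (q - p') (Fin.last n) = q (Fin.last n) - p' (Fin.last n) := rfl
  rw [hlast]
  nlinarith [h1, h2]
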